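/- Let (Ω, 𝒜, ℙ) be a probability space, m ≥ 1, and X = (X_1,…,X_m) an m-tuple of stochastic processes with right-continuous paths having left limits. Let ρ map each delayed and stopped version of X to a real random variable, let 𝒯 be a set of delays containing a refining sequence (τ^n)_{n∈ℕ} of phased delays increasing to identity, and set 𝒳 = {X⋄τ : τ ∈ 𝒯} ∪ {X}. Let δ be a decomposition scheme on 𝒳 whose values δ(Y) are m-tuples of right-continuous processes with left limits starting at 0 that are additive and normalized, and which is stable at X along (τ^n). Let Π be an increasing sequence of unbounded partitions of [0,∞) with mesh tending to 0, and suppose that for every Y ∈ 𝒳 the ISU decomposition δ^{ISU}(Y) of t ↦ ρ(Y^t) with respect to Π exists (as an m-tuple of right-continuous processes with left limits starting at 0) and that δ^{ISU} is stable at X along (τ^n). Then almost surely δ_i(X)(t) = δ^{ISU}_i(X)(t) for all i and all t ≥ 0. -/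

import Mathlib

open Filter Topology Set MeasureTheory

/-- A path is càdlàg on `[0,∞)`: right-continuous at every `t ≥ 0` and with left limits at
every `t > 0`. -/
def CadlagOn (f : ℝ → ℝ) : Prop :=
  (∀ t, 0 ≤ t → ContinuousWithinAt f (Ici t) t) ∧
  (∀ t, 0 < t → ∃ L, Tendsto f (𝓝[<] t) (𝓝 L))

/-- A delay: each component is `[0,∞)`-valued, nondecreasing, right-continuous and bounded
above by the identity on `[0,∞)`. -/
def IsDelay {m : ℕ} (τ : Fin m → ℝ → ℝ) : Prop :=
  ∀ i, (∀ s, 0 ≤ s → 0 ≤ τ i s) ∧ (∀ s u, 0 ≤ s → s ≤ u → τ i s ≤ τ i u) ∧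
    (∀ s, 0 ≤ s → ContinuousWithinAt (τ i) (Ici s) s) ∧ (∀ s, 0 ≤ s → τ i s ≤ s)

/-- A delay is phased if there is an unbounded partition of `[0,∞)` such that on each
partition interval at most one of its components is non-constant. -/
def IsPhasedDelay {m : ℕ} (τ : Fin m → ℝ → ℝ) : Prop :=
  ∃ u : ℕ → ℝ, u 0 = 0 ∧ StrictMono u ∧ Tendsto u atTop atTop ∧
    ∀ l, ∃ i₀ : Fin m, ∀ j ≠ i₀,
      ∀ x ∈ Ioc (u l) (u (l + 1)), ∀ y ∈ Ioc (u l) (u (l + 1)), τ j x = τ j y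

/-- A refining sequence of delays that increases to identity. -/
def IsRefiningToIdentity {m : ℕ} (τ : ℕ → Fin m → ℝ → ℝ) : Prop :=
  ∀ (i : Fin m) (t : ℝ), 0 ≤ t →
    (∀ n, τ n i '' Icc 0 t ⊆ τ (n + 1) i '' Icc 0 t) ∧
    closure (⋃ n, τ n i '' Icc 0 t) = Icc 0 t

/-- The delayed process tuple `X ⋄ τ = (X_1 ∘ τ_1, …, X_m ∘ τ_m)`. -/
def delayed {Ω : Type*} {m : ℕ} (X : Fin m → Ω → ℝ → ℝ) (τ : Fin m → ℝ → ℝ) :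
    Fin m → Ω → ℝ → ℝ :=
  fun i ω u => X i ω (τ i u)

/-- The componentwise stopped tuple of processes `Y^{(t_1,…,t_m)}`. -/
noncomputable def stopProc {Ω : Type*} {m : ℕ} (Y : Fin m → Ω → ℝ → ℝ) (tv : Fin m → ℝ) :
    Fin m → Ω → ℝ → ℝ :=
  fun i ω u => if u ≤ tv i then Y i ω u else Y i ω (tv i)

/-- A decomposition scheme `δ` on a family `𝒳` of process tuples is good if, for every
`Y ∈ 𝒳`, the decomposition `δ Y` starts at `0`, has càdlàg paths, is additive and is
normalized. -/
def IsGoodScheme {Ω : Type*} [MeasurableSpace Ω] (μ : Measure Ω) {m : ℕ}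
    (ρ : (Fin m → Ω → ℝ → ℝ) → Ω → ℝ) (𝒳 : Set (Fin m → Ω → ℝ → ℝ))
    (δ : (Fin m → Ω → ℝ → ℝ) → Fin m → ℝ → Ω → ℝ) : Prop :=
  ∀ Y ∈ 𝒳,
    (∀ (i : Fin m) ω, δ Y i 0 ω = 0) ∧
    (∀ (i : Fin m) ω, CadlagOn (fun t => δ Y i t ω)) ∧
    (∀ t, 0 ≤ t → ∀ᵐ ω ∂μ,
      ρ (stopProc Y fun _ => t) ω - ρ (stopProc Y fun _ => 0) ω =
        ∑ i : Fin m, δ Y i t ω) ∧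
    (∀ (i : Fin m) (a b : ℝ), 0 ≤ a → a < b →
      (∀ ω, ∀ x ∈ Ioc a b, ∀ y ∈ Ioc a b, Y i ω x = Y i ω y) →
      ∀ᵐ ω ∂μ, ∀ x ∈ Ioc a b, ∀ y ∈ Ioc a b, δ Y i x ω = δ Y i y ω)

/-- A decomposition scheme `δ` is stable at `X` along the delay sequence `τ`: the left
limits of `δ (X ⋄ τ n)` converge in probability to the left limits of `δ X`. -/
def StableAt {Ω : Type*} [MeasurableSpace Ω] (μ : Measure Ω) {m : ℕ}
    (X : Fin m → Ω → ℝ → ℝ) (τ : ℕ → Fin m → ℝ → ℝ)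
    (δ : (Fin m → Ω → ℝ → ℝ) → Fin m → ℝ → Ω → ℝ) : Prop :=
  ∀ (i : Fin m) (t : ℝ), 0 < t →
    TendstoInMeasure μ
      (fun n ω => Function.leftLim (fun s => δ (delayed X (τ n)) i s ω) t) atTop
      (fun ω => Function.leftLim (fun s => δ X i s ω) t)


/-- The sequentially-updated time vector `v^{l,i}(t)`. -/
def suV {m : ℕ} (s : ℕ → ℝ) (l : ℕ) (i : Fin m) (t : ℝ) : Fin m → ℝ :=
  fun j => if j ≤ i then min (s (l + 1)) t else min (s l) t

/-- The time vector `w^{l,i}(t)`: as `v^{l,i}(t)` but with `i`-th coordinate `s_l ∧ t`. -/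
def suW {m : ℕ} (s : ℕ → ℝ) (l : ℕ) (i : Fin m) (t : ℝ) : Fin m → ℝ :=
  fun j => if j < i then min (s (l + 1)) t else min (s l) t

section Helpers


section InMeasure

variable {Ω : Type*} [MeasurableSpace Ω] {μ : Measure Ω}

lemma my_tim_congr_fun {f f' : ℕ → Ω → ℝ} {g : Ω → ℝ}
    (h : ∀ᶠ n in atTop, f n = f' n)
    (hf : TendstoInMeasure μ f atTop g) : TendstoInMeasure μ f' atTop g := by
  intro ε hε
  refine Filter.Tendsto.congr' ?_ (hf ε hε)
  filter_upwards [h] with n hn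
  rw [hn]

lemma my_tim_unique {f : ℕ → Ω → ℝ} {g h : Ω → ℝ}
    (hg : TendstoInMeasure μ f atTop g) (hh : TendstoInMeasure μ f atTop h) :
    g =ᵐ[μ] h := by
  rw [tendstoInMeasure_iff_dist] at hg hh
  have key : ∀ ε : ℝ, 0 < ε → μ {ω | ε ≤ dist (g ω) (h ω)} = 0 := by
    intro ε hε
    have hsub : ∀ n, {ω | ε ≤ dist (g ω) (h ω)} ⊆
        {ω | ε/2 ≤ dist (f n ω) (g ω)} ∪ {ω | ε/2 ≤ dist (f n ω) (h ω)} := by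
      intro n ω hω
      by_contra hc
      simp only [Set.mem_union, Set.mem_setOf_eq, not_or, not_le] at hc
      have hd : dist (g ω) (h ω) ≤ dist (f n ω) (g ω) + dist (f n ω) (h ω) :=
        dist_triangle_left _ _ _
      have : dist (g ω) (h ω) < ε := by
        calc dist (g ω) (h ω) ≤ dist (f n ω) (g ω) + dist (f n ω) (h ω) := hd
          _ < ε/2 + ε/2 := add_lt_add hc.1 hc.2
          _ = ε := by ring
      exact absurd hω (not_le.2 this)
    have hbound : ∀ n, μ {ω | ε ≤ dist (g ω) (h ω)} ≤
        μ {ω | ε/2 ≤ dist (f n ω) (g ω)} + μ {ω | ε/2 ≤ dist (f n ω) (h ω)} := by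
      intro n
      exact le_trans (measure_mono (hsub n)) (measure_union_le _ _)
    have hlim : Tendsto (fun n => μ {ω | ε/2 ≤ dist (f n ω) (g ω)} +
        μ {ω | ε/2 ≤ dist (f n ω) (h ω)}) atTop (𝓝 0) := by
      have := Filter.Tendsto.add (hg (ε/2) (half_pos hε)) (hh (ε/2) (half_pos hε))
      simpa using this
    have : μ {ω | ε ≤ dist (g ω) (h ω)} ≤ 0 := ge_of_tendsto' hlim hbound
    exact le_antisymm this zero_le
  have h2 : ∀ᵐ ω ∂μ, ∀ k : ℕ, ¬ ((1:ℝ)/(k+1) ≤ dist (g ω) (h ω)) := by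
    rw [ae_all_iff]
    intro k
    have hk := key ((1:ℝ)/(k+1)) (by positivity)
    rw [ae_iff]
    simpa using hk
  filter_upwards [h2] with ω hω
  by_contra hne
  obtain ⟨k, hk⟩ := exists_nat_one_div_lt (dist_pos.2 hne)
  exact hω k hk.le

lemma my_tim_const (g : Ω → ℝ) : TendstoInMeasure μ (fun _ : ℕ => g) atTop g := by
  rw [tendstoInMeasure_iff_dist]
  intro ε hε
  have : {ω | ε ≤ dist (g ω) (g ω)} = (∅ : Set Ω) := by
    ext ω; simp [dist_self, hε.not_ge]
  simp only [this, measure_empty]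
  exact tendsto_const_nhds

lemma my_tim_add {f f' : ℕ → Ω → ℝ} {g g' : Ω → ℝ}
    (hf : TendstoInMeasure μ f atTop g) (hf' : TendstoInMeasure μ f' atTop g') :
    TendstoInMeasure μ (fun n ω => f n ω + f' n ω) atTop (fun ω => g ω + g' ω) := by
  rw [tendstoInMeasure_iff_dist] at hf hf' ⊢
  intro ε hε
  have hsub : ∀ n, {ω | ε ≤ dist (f n ω + f' n ω) (g ω + g' ω)} ⊆
      {ω | ε/2 ≤ dist (f n ω) (g ω)} ∪ {ω | ε/2 ≤ dist (f' n ω) (g' ω)} := by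
    intro n ω hω
    by_contra hc
    simp only [Set.mem_union, Set.mem_setOf_eq, not_or, not_le] at hc
    have : dist (f n ω + f' n ω) (g ω + g' ω) < ε := by
      calc dist (f n ω + f' n ω) (g ω + g' ω)
          ≤ dist (f n ω) (g ω) + dist (f' n ω) (g' ω) := dist_add_add_le _ _ _ _
        _ < ε/2 + ε/2 := add_lt_add hc.1 hc.2
        _ = ε := by ring
    exact absurd hω (not_le.2 this)
  have hlim : Tendsto (fun n => μ {ω | ε/2 ≤ dist (f n ω) (g ω)} +
      μ {ω | ε/2 ≤ dist (f' n ω) (g' ω)}) atTop (𝓝 0) := by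
    have := Filter.Tendsto.add (hf (ε/2) (half_pos hε)) (hf' (ε/2) (half_pos hε))
    simpa using this
  refine tendsto_of_tendsto_of_tendsto_of_le_of_le tendsto_const_nhds hlim
    (fun n => zero_le) (fun n => le_trans (measure_mono (hsub n)) (measure_union_le _ _))

lemma my_tim_sum {κ : Type*} (s : Finset κ) (F : κ → ℕ → Ω → ℝ) (G : κ → Ω → ℝ)
    (h : ∀ j ∈ s, TendstoInMeasure μ (F j) atTop (G j)) :
    TendstoInMeasure μ (fun n ω => ∑ j ∈ s, F j n ω) atTop (fun ω => ∑ j ∈ s, G j ω) := by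
  classical
  induction s using Finset.induction with
  | empty => simpa using my_tim_const (fun _ : Ω => (0:ℝ))
  | @insert j s hj ih =>
    simp only [Finset.sum_insert hj]
    exact my_tim_add (h j (Finset.mem_insert_self _ _))
      (ih (fun k hk => h k (Finset.mem_insert_of_mem hk)))

end InMeasure



lemma cadlag_leftLim_tendsto {f : ℝ → ℝ} (hf : CadlagOn f) {t : ℝ} (ht : 0 < t)
    {θ : ℕ → ℝ} (hθlt : ∀ k, θ k < t) (hθ : Tendsto θ atTop (𝓝 t)) :
    Tendsto (fun k => f (θ k)) atTop (𝓝 (Function.leftLim f t)) := by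
  obtain ⟨L, hL⟩ := hf.2 t ht
  have hne : 𝓝[<] t ≠ ⊥ := (inferInstance : (𝓝[<] t).NeBot).ne'
  rw [leftLim_eq_of_tendsto hL]
  exact hL.comp (tendsto_nhdsWithin_of_tendsto_nhds_of_eventually_within _ hθ
    (Eventually.of_forall hθlt))

lemma cadlag_tendsto_leftLim_right {f : ℝ → ℝ} (hf : CadlagOn f) {t : ℝ} (ht : 0 ≤ t) :
    Tendsto (fun q => Function.leftLim f q) (𝓝[>] t) (𝓝 (f t)) := by
  rw [Metric.tendsto_nhdsWithin_nhds]
  intro ε hε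
  have hrc := hf.1 t ht
  rw [Metric.continuousWithinAt_iff] at hrc
  obtain ⟨δ, hδ, hδ'⟩ := hrc (ε/2) (half_pos hε)
  refine ⟨δ, hδ, ?_⟩
  intro q hq hqd
  have hq' : t < q := hq
  obtain ⟨L, hL⟩ := hf.2 q (lt_of_le_of_lt ht hq')
  have hne : 𝓝[<] q ≠ ⊥ := (inferInstance : (𝓝[<] q).NeBot).ne'
  rw [leftLim_eq_of_tendsto hL]
  have hmem : ∀ x ∈ Ioo t q, f x ∈ Metric.closedBall (f t) (ε/2) := by
    intro x hx
    have hdx : dist x t < δ := by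
      rw [Real.dist_eq] at hqd ⊢
      rw [abs_of_pos (by linarith [hx.1] : (0:ℝ) < x - t)]
      rw [abs_of_pos (by linarith : (0:ℝ) < q - t)] at hqd
      linarith [hx.2]
    exact (hδ' (le_of_lt hx.1) hdx).le
  have hball : L ∈ Metric.closedBall (f t) (ε/2) := by
    refine Metric.isClosed_closedBall.mem_of_tendsto hL ?_
    filter_upwards [Ioo_mem_nhdsLT hq'] with x hx using hmem x hx
  calc dist L (f t) ≤ ε/2 := Metric.mem_closedBall.1 hball
    _ < ε := by linarith

lemma cadlag_eq_of_leftLim_eq {f g : ℝ → ℝ} (hf : CadlagOn f) (hg : CadlagOn g)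
    (h : ∀ q : ℚ, 0 < (q:ℝ) → Function.leftLim f q = Function.leftLim g q)
    {t : ℝ} (ht : 0 ≤ t) : f t = g t := by
  have hseq : ∀ k : ℕ, ∃ q : ℚ, t < (q:ℝ) ∧ (q:ℝ) < t + 1/(k+1) := by
    intro k
    have hlt : t < t + 1/((k:ℝ)+1) := by
      have : (0:ℝ) < 1/((k:ℝ)+1) := by positivity
      linarith
    obtain ⟨q, hq1, hq2⟩ := exists_rat_btwn hlt
    exact ⟨q, hq1, hq2⟩
  choose q hq1 hq2 using hseq
  have hqt : Tendsto (fun k => ((q k : ℝ))) atTop (𝓝 t) := by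
    have hub : Tendsto (fun k : ℕ => t + 1/((k:ℝ)+1)) atTop (𝓝 t) := by
      have := tendsto_one_div_add_atTop_nhds_zero_nat (𝕜 := ℝ)
      have h2 := tendsto_const_nhds (x := t) (f := atTop (α := ℕ)) |>.add this
      simpa using h2
    exact tendsto_of_tendsto_of_tendsto_of_le_of_le tendsto_const_nhds hub
      (fun k => (hq1 k).le) (fun k => (hq2 k).le)
  have hqmem : ∀ k, ((q k : ℝ)) ∈ Ioi t := fun k => hq1 k
  have h1 : Tendsto (fun k => Function.leftLim f (q k)) atTop (𝓝 (f t)) :=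
    (cadlag_tendsto_leftLim_right hf ht).comp
      (tendsto_nhdsWithin_of_tendsto_nhds_of_eventually_within _ hqt
        (Eventually.of_forall hqmem))
  have h2 : Tendsto (fun k => Function.leftLim g (q k)) atTop (𝓝 (g t)) :=
    (cadlag_tendsto_leftLim_right hg ht).comp
      (tendsto_nhdsWithin_of_tendsto_nhds_of_eventually_within _ hqt
        (Eventually.of_forall hqmem))
  have heq : (fun k => Function.leftLim f (q k)) = fun k => Function.leftLim g (q k) :=
    funext fun k => h (q k) (lt_of_le_of_lt ht (hq1 k))
  rw [heq] at h1
  exact tendsto_nhds_unique h1 h2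



section SU

variable {Ω : Type*} {m : ℕ}

lemma stop1_congr {f : ℝ → ℝ} {a b c d : ℝ}
    (hconst : ∀ p ∈ Icc a b, ∀ q ∈ Icc a b, f p = f q)
    (hc : c ∈ Icc a b) (hd : d ∈ Icc a b) :
    (fun u => if u ≤ c then f u else f c) = (fun u => if u ≤ d then f u else f d) := by
  funext u
  by_cases h1 : u ≤ c <;> by_cases h2 : u ≤ d <;> simp only [h1, h2, if_pos, if_neg,
    if_true, if_false]
  · exact hconst u ⟨le_trans hd.1 (not_le.1 h2).le, le_trans h1 hc.2⟩ d hd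
  · exact hconst c hc u ⟨le_trans hc.1 (not_le.1 h1).le, le_trans h2 hd.2⟩
  · exact hconst c hc d hd

lemma stopProc_congr {Y : Fin m → Ω → ℝ → ℝ} {i : Fin m} {a b : ℝ}
    (hconst : ∀ ω, ∀ p ∈ Icc a b, ∀ q ∈ Icc a b, Y i ω p = Y i ω q)
    {tv tv' : Fin m → ℝ} (hj : ∀ j, j ≠ i → tv j = tv' j)
    (h1 : tv i ∈ Icc a b) (h2 : tv' i ∈ Icc a b) :
    stopProc Y tv = stopProc Y tv' := by
  funext j ω u
  by_cases hji : j = i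
  · subst hji
    have := congrFun (stop1_congr (f := Y j ω) (hconst ω) h1 h2) u
    simpa [stopProc] using this
  · simp [stopProc, hj j hji]

lemma suVW_off (g : ℕ → ℝ) (l : ℕ) (i j : Fin m) (t : ℝ) (hj : j ≠ i) :
    suV g l i t j = suW g l i t j := by
  simp only [suV, suW, hj.le_iff_lt]

lemma suV_self (g : ℕ → ℝ) (l : ℕ) (i : Fin m) (t : ℝ) :
    suV g l i t i = min (g (l+1)) t := by simp [suV]

lemma suW_self (g : ℕ → ℝ) (l : ℕ) (i : Fin m) (t : ℝ) :
    suW g l i t i = min (g l) t := by simp [suW]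

lemma su_term_stable {Y : Fin m → Ω → ℝ → ℝ} (ρ : (Fin m → Ω → ℝ → ℝ) → Ω → ℝ) {i : Fin m}
    {g : ℕ → ℝ} (hg : Monotone g)
    {x x' t : ℝ} (hx : x < x') (hx't : x' ≤ t)
    (hmesh : ∀ k, g (k+1) - g k < x' - x)
    (hconst : ∀ ω, ∀ p ∈ Icc x t, ∀ q ∈ Icc x t, Y i ω p = Y i ω q)
    (l : ℕ) (ω : Ω) :
    ρ (stopProc Y (suV g l i t)) ω - ρ (stopProc Y (suW g l i t)) ω =
    ρ (stopProc Y (suV g l i x')) ω - ρ (stopProc Y (suW g l i x')) ω := by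
  by_cases h1 : g (l+1) ≤ x'
  · have hl1 : g l ≤ x' := (hg (Nat.le_succ l)).trans h1
    have e1 : suV g l i t = suV g l i x' := by
      funext j
      simp only [suV]
      split_ifs
      · rw [min_eq_left (h1.trans hx't), min_eq_left h1]
      · rw [min_eq_left (hl1.trans hx't), min_eq_left hl1]
    have e2 : suW g l i t = suW g l i x' := by
      funext j
      simp only [suW]
      split_ifs
      · rw [min_eq_left (h1.trans hx't), min_eq_left h1]
      · rw [min_eq_left (hl1.trans hx't), min_eq_left hl1]
    rw [e1, e2]
  · push_neg at h1
    have hxgl : x < g l := by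
      rcases le_or_gt x' (g l) with h | h
      · linarith
      · have := hmesh l; linarith
    have hmm : ∀ T, x' ≤ T → T ≤ t →
        min (g (l+1)) T ∈ Icc x t ∧ min (g l) T ∈ Icc x t := by
      intro T hT hT'
      refine ⟨⟨(lt_min (by linarith) (by linarith)).le, (min_le_right _ _).trans hT'⟩,
        ⟨?_, (min_le_right _ _).trans hT'⟩⟩
      rcases le_or_gt (g l) T with h | h
      · rw [min_eq_left h]; exact hxgl.le
      · rw [min_eq_right h.le]; linarith
    have z : ∀ T, x' ≤ T → T ≤ t →
        ρ (stopProc Y (suV g l i T)) ω = ρ (stopProc Y (suW g l i T)) ω := by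
      intro T hT hT'
      have hmmT := hmm T hT hT'
      have := stopProc_congr hconst (tv := suV g l i T) (tv' := suW g l i T)
        (fun j hj => suVW_off g l i j T hj) (by rw [suV_self]; exact hmmT.1)
        (by rw [suW_self]; exact hmmT.2)
      rw [this]
    rw [z t hx't le_rfl, z x' le_rfl hx't, sub_self, sub_self]

lemma su_total {Y : Fin m → Ω → ℝ → ℝ} (ρ : (Fin m → Ω → ℝ → ℝ) → Ω → ℝ)
    {g : ℕ → ℝ} (hg : StrictMono g) (hg0 : g 0 = 0) (hgu : Tendsto g atTop atTop)
    {t : ℝ} (ht : 0 ≤ t) (ω : Ω) :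
    ∑ j : Fin m, ∑ᶠ l : ℕ, (ρ (stopProc Y (suV g l j t)) ω - ρ (stopProc Y (suW g l j t)) ω)
      = ρ (stopProc Y fun _ => t) ω - ρ (stopProc Y fun _ => 0) ω := by
  obtain ⟨L, hL⟩ : ∃ L, t ≤ g L := (hgu.eventually_ge_atTop t).exists
  have hzero : ∀ (j : Fin m) (l : ℕ), L ≤ l →
      ρ (stopProc Y (suV g l j t)) ω - ρ (stopProc Y (suW g l j t)) ω = 0 := by
    intro j l hl
    have htl : t ≤ g l := hL.trans (hg.monotone hl)
    have htl1 : t ≤ g (l+1) := htl.trans (hg.monotone (Nat.le_succ l))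
    have h1 : suV g l j t = fun _ => t := by
      funext j'; simp only [suV]; split_ifs
      · exact min_eq_right htl1
      · exact min_eq_right htl
    have h2 : suW g l j t = fun _ => t := by
      funext j'; simp only [suW]; split_ifs
      · exact min_eq_right htl1
      · exact min_eq_right htl
    rw [h1, h2, sub_self]
  have hfin : ∀ j : Fin m,
      ∑ᶠ l : ℕ, (ρ (stopProc Y (suV g l j t)) ω - ρ (stopProc Y (suW g l j t)) ω)
        = ∑ l ∈ Finset.range L, (ρ (stopProc Y (suV g l j t)) ω - ρ (stopProc Y (suW g l j t)) ω) := by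
    intro j
    apply finsum_eq_sum_of_support_subset
    intro l hl
    simp only [Function.mem_support] at hl
    simp only [Finset.coe_range, Set.mem_Iio]
    by_contra hc
    exact hl (hzero j l (le_of_not_gt hc))
  -- telescoping
  have hinner : ∀ l : ℕ,
      ∑ j : Fin m, (ρ (stopProc Y (suV g l j t)) ω - ρ (stopProc Y (suW g l j t)) ω)
        = ρ (stopProc Y fun _ => min (g (l+1)) t) ω - ρ (stopProc Y fun _ => min (g l) t) ω := by
    intro l
    set F2 : ℕ → ℝ := fun k =>
      ρ (stopProc Y (fun j' => if (j' : ℕ) < k then min (g (l+1)) t else min (g l) t)) ω with hF2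
    have hV : ∀ j : Fin m, ρ (stopProc Y (suV g l j t)) ω = F2 ((j:ℕ)+1) := by
      intro j
      have : suV g l j t = fun j' : Fin m => if (j' : ℕ) < (j:ℕ)+1 then min (g (l+1)) t else min (g l) t := by
        funext j'
        simp only [suV]
        refine if_congr ?_ rfl rfl
        rw [Fin.le_def, Nat.lt_succ_iff]
      rw [this]
    have hW : ∀ j : Fin m, ρ (stopProc Y (suW g l j t)) ω = F2 (j:ℕ) := by
      intro j
      have : suW g l j t = fun j' : Fin m => if (j' : ℕ) < (j:ℕ) then min (g (l+1)) t else min (g l) t := by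
        funext j'
        simp only [suW]
        refine if_congr ?_ rfl rfl
        rw [Fin.lt_def]
      rw [this]
    have : ∑ j : Fin m, (ρ (stopProc Y (suV g l j t)) ω - ρ (stopProc Y (suW g l j t)) ω)
        = ∑ j : Fin m, (F2 ((j:ℕ)+1) - F2 (j:ℕ)) := by
      refine Finset.sum_congr rfl (fun j _ => by rw [hV j, hW j])
    rw [this, Fin.sum_univ_eq_sum_range (fun k => F2 (k+1) - F2 k) m, Finset.sum_range_sub]
    have hFm : F2 m = ρ (stopProc Y fun _ => min (g (l+1)) t) ω := by
      have he : (fun j' : Fin m => if (j' : ℕ) < m then min (g (l+1)) t else min (g l) t)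
          = (fun _ : Fin m => min (g (l+1)) t) := funext fun j' => if_pos j'.isLt
      simp only [hF2]
      rw [he]
    have hF0 : F2 0 = ρ (stopProc Y fun _ => min (g l) t) ω := by
      have he : (fun j' : Fin m => if (j' : ℕ) < 0 then min (g (l+1)) t else min (g l) t)
          = (fun _ : Fin m => min (g l) t) := funext fun j' => if_neg (Nat.not_lt_zero _)
      simp only [hF2]
      rw [he]
    rw [hFm, hF0]
  calc ∑ j : Fin m, ∑ᶠ l : ℕ, (ρ (stopProc Y (suV g l j t)) ω - ρ (stopProc Y (suW g l j t)) ω)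
      = ∑ j : Fin m, ∑ l ∈ Finset.range L,
          (ρ (stopProc Y (suV g l j t)) ω - ρ (stopProc Y (suW g l j t)) ω) :=
        Finset.sum_congr rfl (fun j _ => hfin j)
    _ = ∑ l ∈ Finset.range L, ∑ j : Fin m,
          (ρ (stopProc Y (suV g l j t)) ω - ρ (stopProc Y (suW g l j t)) ω) := Finset.sum_comm
    _ = ∑ l ∈ Finset.range L,
          (ρ (stopProc Y fun _ => min (g l.succ) t) ω - ρ (stopProc Y fun _ => min (g l) t) ω) :=
        Finset.sum_congr rfl (fun l _ => hinner l)
    _ = ρ (stopProc Y fun _ => min (g L) t) ω - ρ (stopProc Y fun _ => min (g 0) t) ω :=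
        Finset.sum_range_sub (fun l => ρ (stopProc Y fun _ => min (g l) t) ω) L
    _ = ρ (stopProc Y fun _ => t) ω - ρ (stopProc Y fun _ => 0) ω := by
        rw [min_eq_right hL, hg0, min_eq_left ht]

end SU

end Helpers


lemma seq_to_right_limit {F : ℝ → ℝ} {A θ : ℝ} (hAθ : A < θ)
    (hrc : ContinuousWithinAt F (Ici A) A)
    (hval : ∀ k : ℕ, F (A + (θ - A) * (1/((k:ℝ)+1))) = F θ) : F θ = F A := by
  have htend0 : Tendsto (fun k : ℕ => (θ - A) * (1/((k:ℝ)+1))) atTop (𝓝 0) := by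
    have h1 := tendsto_one_div_add_atTop_nhds_zero_nat (𝕜 := ℝ)
    have h2 := (tendsto_const_nhds (x := θ - A) (f := atTop (α := ℕ))).mul h1
    simpa using h2
  have htend : Tendsto (fun k : ℕ => A + (θ - A) * (1/((k:ℝ)+1))) atTop (𝓝 A) := by
    have h2 := (tendsto_const_nhds (x := A) (f := atTop (α := ℕ))).add htend0
    simpa using h2
  have hmem : ∀ k : ℕ, A + (θ - A) * (1/((k:ℝ)+1)) ∈ Ici A := by
    intro k
    have h1 : (0:ℝ) < 1/((k:ℝ)+1) := by positivity
    have h2 : (0:ℝ) < θ - A := by linarith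
    simp only [Set.mem_Ici]
    nlinarith
  have hcomp : Tendsto (fun k : ℕ => F (A + (θ - A) * (1/((k:ℝ)+1)))) atTop (𝓝 (F A)) :=
    Filter.Tendsto.comp hrc (tendsto_nhdsWithin_of_tendsto_nhds_of_eventually_within _ htend
      (Eventually.of_forall hmem))
  have hconstt : Tendsto (fun _ : ℕ => F θ) atTop (𝓝 (F A)) := hcomp.congr hval
  exact tendsto_nhds_unique tendsto_const_nhds hconstt

/-- Theorem 5.2, ISU representation. Any additive, normalized
decomposition scheme `δ` that is stable at `X` coincides almost surely at `X` with the ISU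
decomposition scheme (the limit in probability of the SU decompositions along an increasing
sequence of unbounded partitions with vanishing mesh), provided the latter exists and is
stable at `X`. -/
theorem additive_normalized_stable_scheme_is_ISU
    {Ω : Type*} [MeasurableSpace Ω] (μ : Measure Ω) [IsProbabilityMeasure μ]
    {m : ℕ} (hm : 1 ≤ m)
    (X : Fin m → Ω → ℝ → ℝ) (hX : ∀ i ω, CadlagOn (X i ω))
    (ρ : (Fin m → Ω → ℝ → ℝ) → Ω → ℝ)
    (𝒯 : Set (Fin m → ℝ → ℝ)) (h𝒯 : ∀ τ' ∈ 𝒯, IsDelay τ')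
    (τ : ℕ → Fin m → ℝ → ℝ) (hτmem : ∀ n, τ n ∈ 𝒯)
    (hτdelay : ∀ n, IsDelay (τ n))
    (hτphased : ∀ n, IsPhasedDelay (τ n))
    (hτref : IsRefiningToIdentity τ)
    (δ : (Fin m → Ω → ℝ → ℝ) → Fin m → ℝ → Ω → ℝ)
    (hδ : IsGoodScheme μ ρ (insert X {Y | ∃ τ' ∈ 𝒯, Y = delayed X τ'}) δ)
    (hδstab : StableAt μ X τ δ)
    -- the partition sequence Π
    (s : ℕ → ℕ → ℝ)
    (hs0 : ∀ n, s n 0 = 0) (hsmono : ∀ n, StrictMono (s n))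
    (hsunbdd : ∀ n, Tendsto (s n) atTop atTop)
    (hincr : ∀ n, Set.range (s n) ⊆ Set.range (s (n + 1)))
    (hmesh : ∀ ε > (0 : ℝ), ∃ N, ∀ n ≥ N, ∀ k, s n (k + 1) - s n k < ε)
    -- the ISU decomposition scheme with respect to Π: it exists on 𝒳 …
    (δISU : (Fin m → Ω → ℝ → ℝ) → Fin m → ℝ → Ω → ℝ)
    (hISU0 : ∀ Y ∈ insert X {Y | ∃ τ' ∈ 𝒯, Y = delayed X τ'},
      ∀ (i : Fin m) ω, δISU Y i 0 ω = 0)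
    (hISUcadlag : ∀ Y ∈ insert X {Y | ∃ τ' ∈ 𝒯, Y = delayed X τ'},
      ∀ (i : Fin m) ω, CadlagOn (fun t => δISU Y i t ω))
    (hISUlim : ∀ Y ∈ insert X {Y | ∃ τ' ∈ 𝒯, Y = delayed X τ'},
      ∀ (i : Fin m) (t : ℝ), 0 ≤ t →
        TendstoInMeasure μ
          (fun n ω => ∑ᶠ l : ℕ,
            (ρ (stopProc Y (suV (s n) l i t)) ω - ρ (stopProc Y (suW (s n) l i t)) ω))
          atTop (δISU Y i t))
    -- … and is stable at X
    (hISUstab : StableAt μ X τ δISU) :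
    ∀ᵐ ω ∂μ, ∀ (i : Fin m) (t : ℝ), 0 ≤ t → δ X i t ω = δISU X i t ω := by
  classical
  have hXmem : X ∈ insert X {Y | ∃ τ' ∈ 𝒯, Y = delayed X τ'} := Set.mem_insert _ _
  have hYmem : ∀ n : ℕ, delayed X (τ n) ∈ insert X {Y | ∃ τ' ∈ 𝒯, Y = delayed X τ'} :=
    fun n => Set.mem_insert_iff.mpr (Or.inr ⟨τ n, hτmem n, rfl⟩)
  -- normalization property of the ISU scheme, derived from stability of the SU sums
  have NORM_ISU : ∀ Y ∈ insert X {Y | ∃ τ' ∈ 𝒯, Y = delayed X τ'}, ∀ (i : Fin m) (A B θ : ℝ),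
      0 ≤ A → A < B → θ ∈ Ioc A B →
      (∀ ω, ∀ p ∈ Ioc A B, ∀ q ∈ Ioc A B, Y i ω p = Y i ω q) →
      δISU Y i θ =ᵐ[μ] δISU Y i A := by
    intro Y hY i A B θ hA hAB hθ hconst
    have hθ0 : 0 ≤ θ := hA.trans hθ.1.le
    have step1 : ∀ x x' : ℝ, A < x → x < x' → x' ≤ θ → δISU Y i θ =ᵐ[μ] δISU Y i x' := by
      intro x x' hAx hxx' hx'θ
      obtain ⟨N, hN⟩ := hmesh (x' - x) (by linarith)
      have hconst' : ∀ ω, ∀ p ∈ Icc x θ, ∀ q ∈ Icc x θ, Y i ω p = Y i ω q := by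
        intro ω p hp q hq
        exact hconst ω p ⟨lt_of_lt_of_le hAx hp.1, hp.2.trans hθ.2⟩
          q ⟨lt_of_lt_of_le hAx hq.1, hq.2.trans hθ.2⟩
      have hterm : ∀ᶠ n in atTop, (fun ω => ∑ᶠ l : ℕ,
            (ρ (stopProc Y (suV (s n) l i x')) ω - ρ (stopProc Y (suW (s n) l i x')) ω)) =
          (fun ω => ∑ᶠ l : ℕ,
            (ρ (stopProc Y (suV (s n) l i θ)) ω - ρ (stopProc Y (suW (s n) l i θ)) ω)) := by
        filter_upwards [eventually_ge_atTop N] with n hn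
        funext ω
        exact (finsum_congr fun l =>
          su_term_stable ρ (hsmono n).monotone hxx' hx'θ (hN n hn) hconst' l ω).symm
      have h1 := hISUlim Y hY i θ hθ0
      have h2 := hISUlim Y hY i x' (by linarith)
      exact my_tim_unique h1 (my_tim_congr_fun hterm h2)
    have hseq : ∀ k : ℕ, δISU Y i θ =ᵐ[μ] δISU Y i (A + (θ - A) * (1/((k:ℝ)+1))) := by
      intro k
      have hc : (0:ℝ) < θ - A := by linarith [hθ.1]
      have he : (0:ℝ) < 1/((k:ℝ)+1) := by positivity
      have he1 : (1:ℝ)/((k:ℝ)+1) ≤ 1 := by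
        rw [div_le_one (by positivity)]
        linarith [Nat.cast_nonneg (α := ℝ) k]
      refine step1 (A + (θ - A) * (1/((k:ℝ)+1)) / 2) (A + (θ - A) * (1/((k:ℝ)+1))) ?_ ?_ ?_
      · nlinarith
      · nlinarith
      · nlinarith
    have hae := ae_all_iff.2 hseq
    filter_upwards [hae] with ω hω
    have hrc := (hISUcadlag Y hY i ω).1 A hA
    exact seq_to_right_limit hθ.1 hrc (fun k => (hω k).symm)
  -- normalization property of the given scheme
  have NORM_δ : ∀ Y ∈ insert X {Y | ∃ τ' ∈ 𝒯, Y = delayed X τ'}, ∀ (i : Fin m) (A B θ : ℝ),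
      0 ≤ A → A < B → θ ∈ Ioc A B →
      (∀ ω, ∀ p ∈ Ioc A B, ∀ q ∈ Ioc A B, Y i ω p = Y i ω q) →
      δ Y i θ =ᵐ[μ] δ Y i A := by
    intro Y hY i A B θ hA hAB hθ hconst
    have hconst' : ∀ ω, ∀ p ∈ Ioc A θ, ∀ q ∈ Ioc A θ, Y i ω p = Y i ω q := by
      intro ω p hp q hq
      exact hconst ω p ⟨hp.1, hp.2.trans hθ.2⟩ q ⟨hq.1, hq.2.trans hθ.2⟩
    have h4 := (hδ Y hY).2.2.2 i A θ hA hθ.1 hconst'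
    filter_upwards [h4] with ω hω
    have hrc := ((hδ Y hY).2.1 i ω).1 A hA
    refine seq_to_right_limit hθ.1 hrc (fun k => ?_)
    have hc : (0:ℝ) < θ - A := by linarith [hθ.1]
    have he : (0:ℝ) < 1/((k:ℝ)+1) := by positivity
    have he1 : (1:ℝ)/((k:ℝ)+1) ≤ 1 := by
      rw [div_le_one (by positivity)]
      linarith [Nat.cast_nonneg (α := ℝ) k]
    refine hω _ ⟨by nlinarith, by nlinarith⟩ θ ⟨hθ.1, le_rfl⟩
  -- additivity of the ISU scheme
  have ADD_ISU : ∀ Y ∈ insert X {Y | ∃ τ' ∈ 𝒯, Y = delayed X τ'}, ∀ θ : ℝ, 0 ≤ θ →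
      (fun ω => ∑ j : Fin m, δISU Y j θ ω) =ᵐ[μ]
      (fun ω => ρ (stopProc Y fun _ => θ) ω - ρ (stopProc Y fun _ => 0) ω) := by
    intro Y hY θ hθ
    have hsum := my_tim_sum (μ := μ) Finset.univ
      (fun j n ω => ∑ᶠ l : ℕ,
        (ρ (stopProc Y (suV (s n) l j θ)) ω - ρ (stopProc Y (suW (s n) l j θ)) ω))
      (fun j => δISU Y j θ) (fun j _ => hISUlim Y hY j θ hθ)
    have hconstfun : ∀ n : ℕ, (fun ω => ∑ j : Fin m, ∑ᶠ l : ℕ,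
          (ρ (stopProc Y (suV (s n) l j θ)) ω - ρ (stopProc Y (suW (s n) l j θ)) ω)) =
        (fun ω => ρ (stopProc Y fun _ => θ) ω - ρ (stopProc Y fun _ => 0) ω) := by
      intro n
      funext ω
      exact su_total ρ (hsmono n) (hs0 n) (hsunbdd n) hθ ω
    have h2 : TendstoInMeasure μ
        (fun _ : ℕ => fun ω => ρ (stopProc Y fun _ => θ) ω - ρ (stopProc Y fun _ => 0) ω)
        atTop (fun ω => ∑ j : Fin m, δISU Y j θ ω) :=
      my_tim_congr_fun (Eventually.of_forall hconstfun) hsum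
    exact (my_tim_unique (my_tim_const _) h2).symm
  -- the key identification at the delayed (phased) processes
  have KEY : ∀ (n : ℕ) (i : Fin m) (θ : ℝ), 0 ≤ θ →
      δ (delayed X (τ n)) i θ =ᵐ[μ] δISU (delayed X (τ n)) i θ := by
    intro n
    obtain ⟨u, hu0, humono, huunb, hph⟩ := hτphased n
    choose a ha using hph
    have hY := hYmem n
    have huA : ∀ P : ℕ, 0 ≤ u P := fun P => by
      have h := humono.monotone (Nat.zero_le P)
      rw [hu0] at h
      exact h
    have hYconst : ∀ (P : ℕ) (j : Fin m), j ≠ a P → ∀ ω,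
        ∀ p ∈ Ioc (u P) (u (P+1)), ∀ q ∈ Ioc (u P) (u (P+1)),
          delayed X (τ n) j ω p = delayed X (τ n) j ω q := by
      intro P j hj ω p hp q hq
      simp only [delayed]
      rw [ha P j hj p hp q hq]
    have phase : ∀ P : ℕ,
        (∀ i, δ (delayed X (τ n)) i (u P) =ᵐ[μ] δISU (delayed X (τ n)) i (u P)) →
        ∀ θ ∈ Ioc (u P) (u (P+1)), ∀ i,
          δ (delayed X (τ n)) i θ =ᵐ[μ] δISU (delayed X (τ n)) i θ := by
      intro P hP θ hθ i
      have hAB : u P < u (P+1) := humono (Nat.lt_succ_self P)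
      have hθ0 : 0 ≤ θ := (huA P).trans hθ.1.le
      have hothers : ∀ j : Fin m, j ≠ a P →
          δ (delayed X (τ n)) j θ =ᵐ[μ] δISU (delayed X (τ n)) j θ := by
        intro j hj
        calc δ (delayed X (τ n)) j θ
            =ᵐ[μ] δ (delayed X (τ n)) j (u P) :=
              NORM_δ _ hY j (u P) (u (P+1)) θ (huA P) hAB hθ (hYconst P j hj)
          _ =ᵐ[μ] δISU (delayed X (τ n)) j (u P) := hP j
          _ =ᵐ[μ] δISU (delayed X (τ n)) j θ :=
              (NORM_ISU _ hY j (u P) (u (P+1)) θ (huA P) hAB hθ (hYconst P j hj)).symm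
      by_cases hi : i = a P
      · rw [hi]
        have hadd1 := (hδ _ hY).2.2.1 θ hθ0
        have hadd2 := ADD_ISU _ hY θ hθ0
        have hj_ae : ∀ᵐ ω ∂μ, ∀ j : Fin m, j ≠ a P →
            δ (delayed X (τ n)) j θ ω = δISU (delayed X (τ n)) j θ ω := by
          rw [ae_all_iff]
          intro j
          by_cases hj : j = a P
          · exact Eventually.of_forall fun ω h => absurd hj h
          · exact (hothers j hj).mono fun ω h _ => h
        filter_upwards [hj_ae, hadd1, hadd2] with ω h1 h2 h3
        have hsum : ∑ j : Fin m, δ (delayed X (τ n)) j θ ω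
            = ∑ j : Fin m, δISU (delayed X (τ n)) j θ ω := by
          rw [← h2]
          exact h3.symm
        have hzero : ∑ j : Fin m,
            (δ (delayed X (τ n)) j θ ω - δISU (delayed X (τ n)) j θ ω) = 0 := by
          rw [Finset.sum_sub_distrib, hsum, sub_self]
        have hsingle : ∑ j : Fin m,
            (δ (delayed X (τ n)) j θ ω - δISU (delayed X (τ n)) j θ ω)
            = δ (delayed X (τ n)) (a P) θ ω - δISU (delayed X (τ n)) (a P) θ ω :=
          Finset.sum_eq_single_of_mem (a P) (Finset.mem_univ (a P))
            (fun j _ hj => by rw [h1 j hj, sub_self])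
        have hfin := hsingle.symm.trans hzero
        linarith
      · exact hothers i hi
    have main : ∀ P : ℕ, ∀ i,
        δ (delayed X (τ n)) i (u P) =ᵐ[μ] δISU (delayed X (τ n)) i (u P) := by
      intro P
      induction P with
      | zero =>
        intro i
        rw [hu0]
        exact Eventually.of_forall fun ω => by rw [(hδ _ hY).1 i ω, hISU0 _ hY i ω]
      | succ P ih =>
        intro i
        exact phase P ih (u (P+1)) ⟨humono (Nat.lt_succ_self P), le_rfl⟩ i
    intro i θ hθ0
    rcases eq_or_lt_of_le hθ0 with h0 | h0
    · rw [← h0]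
      exact Eventually.of_forall fun ω => by rw [(hδ _ hY).1 i ω, hISU0 _ hY i ω]
    · have hex : ∃ P, θ ≤ u P := (huunb.eventually_ge_atTop θ).exists
      have hP0 := Nat.find_spec hex
      have hpos : Nat.find hex ≠ 0 := by
        intro h
        rw [h, hu0] at hP0
        linarith
      obtain ⟨P, hP⟩ := Nat.exists_eq_succ_of_ne_zero hpos
      have hlt : u P < θ := by
        have hmin := Nat.find_min hex (m := P) (by omega)
        push_neg at hmin
        exact hmin
      rw [hP] at hP0
      exact phase P (main P) θ ⟨hlt, hP0⟩ i
  -- equality of the left limits at X, via stability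
  have LEFT : ∀ (i : Fin m) (t : ℝ), 0 < t →
      (fun ω => Function.leftLim (fun s => δ X i s ω) t) =ᵐ[μ]
      (fun ω => Function.leftLim (fun s => δISU X i s ω) t) := by
    intro i t ht
    have hpern : ∀ n : ℕ,
        (fun ω => Function.leftLim (fun s => δ (delayed X (τ n)) i s ω) t) =ᵐ[μ]
        (fun ω => Function.leftLim (fun s => δISU (delayed X (τ n)) i s ω) t) := by
      intro n
      have hθmem : ∀ k : ℕ, 0 ≤ t - t * (1/((k:ℝ)+1)) ∧ t - t * (1/((k:ℝ)+1)) < t := by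
        intro k
        have he : (0:ℝ) < 1/((k:ℝ)+1) := by positivity
        have he1 : (1:ℝ)/((k:ℝ)+1) ≤ 1 := by
          rw [div_le_one (by positivity)]
          linarith [Nat.cast_nonneg (α := ℝ) k]
        constructor
        · nlinarith
        · nlinarith
      have hae : ∀ᵐ ω ∂μ, ∀ k : ℕ,
          δ (delayed X (τ n)) i (t - t * (1/((k:ℝ)+1))) ω
            = δISU (delayed X (τ n)) i (t - t * (1/((k:ℝ)+1))) ω :=
        ae_all_iff.2 fun k => KEY n i _ (hθmem k).1
      filter_upwards [hae] with ω hω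
      have htend : Tendsto (fun k : ℕ => t - t * (1/((k:ℝ)+1))) atTop (𝓝 t) := by
        have h1 := tendsto_one_div_add_atTop_nhds_zero_nat (𝕜 := ℝ)
        have h2 := (tendsto_const_nhds (x := t) (f := atTop (α := ℕ))).sub
          ((tendsto_const_nhds (x := t) (f := atTop (α := ℕ))).mul h1)
        simpa using h2
      have h1 : Tendsto (fun k : ℕ => δ (delayed X (τ n)) i (t - t * (1/((k:ℝ)+1))) ω) atTop
          (𝓝 (Function.leftLim (fun s => δ (delayed X (τ n)) i s ω) t)) :=
        cadlag_leftLim_tendsto ((hδ _ (hYmem n)).2.1 i ω) ht (fun k => (hθmem k).2) htend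
      have h2 : Tendsto (fun k : ℕ => δISU (delayed X (τ n)) i (t - t * (1/((k:ℝ)+1))) ω) atTop
          (𝓝 (Function.leftLim (fun s => δISU (delayed X (τ n)) i s ω) t)) :=
        cadlag_leftLim_tendsto (hISUcadlag _ (hYmem n) i ω) ht (fun k => (hθmem k).2) htend
      have h1' := h1.congr hω
      exact tendsto_nhds_unique h1' h2
    have hδs := hδstab i t ht
    have hIs := hISUstab i t ht
    have hδs' : TendstoInMeasure μ
        (fun n ω => Function.leftLim (fun s => δISU (delayed X (τ n)) i s ω) t) atTop
        (fun ω => Function.leftLim (fun s => δ X i s ω) t) :=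
      TendstoInMeasure.congr_left hpern hδs
    exact my_tim_unique hδs' hIs
  -- conclusion
  have hQ : ∀ᵐ ω ∂μ, ∀ i : Fin m, ∀ q : ℚ, 0 < (q:ℝ) →
      Function.leftLim (fun s => δ X i s ω) q = Function.leftLim (fun s => δISU X i s ω) q := by
    rw [ae_all_iff]
    intro i
    rw [ae_all_iff]
    intro q
    by_cases hq : 0 < (q:ℝ)
    · exact (LEFT i q hq).mono fun ω h _ => h
    · exact Eventually.of_forall fun ω h => absurd h hq
  filter_upwards [hQ] with ω hω
  intro i t ht
  exact cadlag_eq_of_leftLim_eq ((hδ X hXmem).2.1 i ω) (hISUcadlag X hXmem i ω)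
    (fun q hq => hω i q hq) ht
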